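/- Let G be a finitely generated nilpotent group, H ≤ G a subgroup of finite index, and s a positive integer. Let H^(1/s) denote the subgroup of G generated by { g ∈ G : ord_H(g) divides s }, where ord_H(g) = min{ n > 0 : gⁿ ∈ H }. Then the index [H^(1/s) : H] divides s^k for some k ∈ ℕ; equivalently, every prime dividing [H^(1/s) : H] divides s. -/

import Mathlib

open Subgroup

section AuxLemmas

variable {Γ : Type*} [Group Γ] [Finite Γ]

private lemma card_eq_relindex_mul_card {B C : Subgroup Γ} (h : B ≤ C) :
    Nat.card C = B.relIndex C * Nat.card B := by
  have h2 := Subgroup.index_mul_card (B.subgroupOf C)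
  rw [Nat.card_congr (Subgroup.subgroupOfEquivOfLe h).toEquiv] at h2
  exact h2.symm

private lemma card_sup_dvd {A B : Subgroup Γ} (hA : A.Normal) :
    Nat.card (A ⊔ B : Subgroup Γ) ∣ Nat.card A * Nat.card B := by
  haveI := hA
  have h2 := card_eq_relindex_mul_card (le_sup_left : A ≤ A ⊔ B)
  rw [Subgroup.relIndex_sup_left] at h2
  rw [h2, mul_comm (Nat.card A) (Nat.card B)]
  exact Nat.mul_dvd_mul_right (Subgroup.index_dvd_card (A.subgroupOf B)) _

private lemma biSup_normal_card (F : Finset ℕ) (P : ℕ → Subgroup Γ)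
    (hN : ∀ p ∈ F, (P p).Normal) :
    (⨆ p ∈ F, P p).Normal ∧
      Nat.card (⨆ p ∈ F, P p : Subgroup Γ) ∣ ∏ p ∈ F, Nat.card (P p) := by
  classical
  induction F using Finset.induction_on with
  | empty =>
      constructor
      · simp only [Finset.notMem_empty, iSup_false, iSup_bot]
        infer_instance
      · simp
  | @insert a F' ha ih =>
      obtain ⟨ihN, ihD⟩ := ih (fun p hp => hN p (Finset.mem_insert_of_mem hp))
      haveI := ihN
      haveI := hN a (Finset.mem_insert_self a F')
      have hsup : (⨆ p ∈ insert a F', P p) = P a ⊔ ⨆ p ∈ F', P p := by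
        rw [Finset.iSup_insert]
      constructor
      · rw [hsup]; infer_instance
      · rw [hsup, Finset.prod_insert ha]
        exact (card_sup_dvd ‹(P a).Normal›).trans (Nat.mul_dvd_mul_left _ ihD)

private lemma relindex_sup_dvd_card {B T : Subgroup Γ} (hT : T.Normal) :
    B.relIndex (B ⊔ T) ∣ Nat.card T := by
  haveI := hT
  have h1 : Nat.card (B ⊔ T : Subgroup Γ) = B.relIndex (B ⊔ T) * Nat.card B :=
    card_eq_relindex_mul_card le_sup_left
  have h2 : Nat.card (B ⊔ T : Subgroup Γ) = T.relIndex B * Nat.card T := by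
    rw [card_eq_relindex_mul_card (le_sup_right : T ≤ B ⊔ T), Subgroup.relIndex_sup_right]
  have h3 : T.relIndex B ∣ Nat.card B := Subgroup.index_dvd_card (T.subgroupOf B)
  have key : B.relIndex (B ⊔ T) * Nat.card B ∣ Nat.card T * Nat.card B := by
    rw [← h1, h2, mul_comm (Nat.card T) (Nat.card B)]
    exact Nat.mul_dvd_mul_right h3 _
  exact (Nat.mul_dvd_mul_iff_right (Nat.card_pos (α := B))).mp key

private lemma split_pow {Γ' : Type*} [Group Γ'] (x : Γ') {a b : ℕ}
    (hab : a * b = orderOf x) (hco : Nat.Coprime a b) :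
    ∃ y z : Γ', x = y * z ∧ (∃ m : ℤ, y = x ^ m) ∧ (∃ m : ℤ, z = x ^ m) ∧
      y ^ b = 1 ∧ z ^ a = 1 := by
  obtain ⟨u, v, huv⟩ := hco.isCoprime
  refine ⟨x ^ (u * (a : ℤ)), x ^ (v * (b : ℤ)), ?_, ⟨_, rfl⟩, ⟨_, rfl⟩, ?_, ?_⟩
  · calc x = x ^ (1 : ℤ) := (zpow_one x).symm
      _ = x ^ (u * (a : ℤ) + v * (b : ℤ)) := by rw [huv]
      _ = _ := zpow_add x _ _
  · rw [← zpow_natCast (x ^ (u * (a : ℤ))) b, ← zpow_mul]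
    have h : (u * (a : ℤ)) * (b : ℤ) = ((a * b : ℕ) : ℤ) * u := by push_cast; ring
    rw [h, zpow_mul, zpow_natCast, hab, pow_orderOf_eq_one, one_zpow]
  · rw [← zpow_natCast (x ^ (v * (b : ℤ))) a, ← zpow_mul]
    have h : (v * (b : ℤ)) * (a : ℤ) = ((a * b : ℕ) : ℤ) * v := by push_cast; ring
    rw [h, zpow_mul, zpow_natCast, hab, pow_orderOf_eq_one, one_zpow]

private lemma mem_of_pow_mem (B : Subgroup Γ) {s : ℕ} (w : Γ)
    (hco : Nat.Coprime s (orderOf w)) (hw : w ^ s ∈ B) : w ∈ B := by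
  have hm : 0 < orderOf w := orderOf_pos w
  have hφ : 0 < (orderOf w).totient := Nat.totient_pos.mpr hm
  have hmod : s ^ (orderOf w).totient ≡ 1 [MOD orderOf w] := Nat.ModEq.pow_totient hco
  have hpow : w ^ s ^ (orderOf w).totient = w ^ 1 := pow_eq_pow_iff_modEq.mpr hmod
  obtain ⟨c, hc⟩ : ∃ c, (orderOf w).totient = c + 1 :=
    ⟨(orderOf w).totient - 1, (Nat.succ_pred_eq_of_pos hφ).symm⟩
  rw [pow_one] at hpow
  rw [← hpow, hc, pow_succ', pow_mul]
  exact pow_mem hw _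

private lemma aux_finite [Group.IsNilpotent Γ] (B : Subgroup Γ) (s : ℕ) (hs : 0 < s) :
    ∃ M : Subgroup Γ, B ≤ M ∧ {x : Γ | x ^ s ∈ B} ⊆ (M : Set Γ) ∧
      ∃ k : ℕ, B.relIndex M ∣ s ^ k := by
  classical
  have hsylow : ∀ (p : ℕ) (_ : Fact p.Prime) (P : Sylow p Γ), (P : Subgroup Γ).Normal :=
    ((isNilpotent_of_finite_tfae (G := Γ)).out 0 3).mp ‹Group.IsNilpotent Γ›
  have hchoice : ∀ p : ℕ, p.Prime → ∃ (P : Subgroup Γ) (n : ℕ), P.Normal ∧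
      (∀ Q : Subgroup Γ, IsPGroup p Q → Q ≤ P) ∧ Nat.card P = p ^ n := by
    intro p hp
    haveI := Fact.mk hp
    obtain ⟨P⟩ := (inferInstance : Nonempty (Sylow p Γ))
    have hPn := hsylow p ⟨hp⟩ P
    obtain ⟨n, hn⟩ := IsPGroup.iff_card.mp P.isPGroup'
    refine ⟨P, n, hPn, ?_, hn⟩
    intro Q hQ
    obtain ⟨R, hR⟩ := hQ.exists_le_sylow
    haveI := Sylow.unique_of_normal P hPn
    rwa [show R = P from Subsingleton.elim R P] at hR
  choose! P e hPnorm hPmax hPe using hchoice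
  set T : Subgroup Γ := ⨆ p ∈ s.primeFactors, P p with hT
  have hFn : ∀ p ∈ s.primeFactors, (P p).Normal :=
    fun p hp => hPnorm p (Nat.prime_of_mem_primeFactors hp)
  obtain ⟨hTnormal, hTcard⟩ := biSup_normal_card s.primeFactors P hFn
  have hprod : ∏ p ∈ s.primeFactors, Nat.card (P p) ∣
      s ^ (∑ p ∈ s.primeFactors, e p) := by
    rw [← Finset.prod_pow_eq_pow_sum]
    refine Finset.prod_dvd_prod_of_dvd _ _ ?_
    intro p hp
    rw [hPe p (Nat.prime_of_mem_primeFactors hp)]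
    exact pow_dvd_pow_of_dvd (Nat.dvd_of_mem_primeFactors hp) _
  -- every element of smooth order is in T
  have smooth_mem : ∀ n : ℕ, ∀ x : Γ, orderOf x = n →
      (∀ q : ℕ, q.Prime → q ∣ n → q ∣ s) → x ∈ T := by
    intro n
    induction n using Nat.strong_induction_on with
    | _ n ih =>
      intro x hx hsm
      rcases eq_or_ne n 1 with h1 | h1
      · rw [orderOf_eq_one_iff.mp (hx.trans h1)]
        exact one_mem T
      · have hn0 : n ≠ 0 := by rw [← hx]; exact (orderOf_pos x).ne'
        obtain ⟨p, hp, hpn⟩ := Nat.exists_prime_and_dvd h1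
        have hps : p ∣ s := hsm p hp hpn
        have hab : p ^ n.factorization p * ordCompl[p] n = n :=
          Nat.ordProj_mul_ordCompl_eq_self n p
        have hcop : Nat.Coprime (p ^ n.factorization p) (ordCompl[p] n) :=
          Nat.Coprime.pow_left _ (Nat.coprime_ordCompl hp hn0)
        obtain ⟨y, z, hxyz, hy, hz, hyb, hza⟩ :=
          split_pow x (by rw [hx]; exact hab) hcop
        have hb0 : ordCompl[p] n ≠ 0 := by
          intro h
          rw [h, mul_zero] at hab
          exact hn0 hab.symm
        have ha1 : 1 < p ^ n.factorization p :=
          Nat.one_lt_pow (hp.factorization_pos_of_dvd hn0 hpn).ne' hp.one_lt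
        have hblt : ordCompl[p] n < n := by
          calc ordCompl[p] n = 1 * ordCompl[p] n := (one_mul _).symm
            _ < p ^ n.factorization p * ordCompl[p] n :=
                (Nat.mul_lt_mul_right (Nat.pos_of_ne_zero hb0)).mpr ha1
            _ = n := hab
        have hzT : z ∈ T := by
          have hzP : z ∈ P p := by
            refine hPmax p hp (Subgroup.zpowers z) ?_ (Subgroup.mem_zpowers z)
            rintro ⟨g, hg⟩
            obtain ⟨m, hm⟩ := hg
            refine ⟨n.factorization p, ?_⟩
            ext
            show g ^ p ^ n.factorization p = 1
            rw [← hm, ← zpow_natCast (z ^ m) (p ^ n.factorization p), ← zpow_mul,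
              mul_comm, zpow_mul, zpow_natCast, hza, one_zpow]
          have hpF : p ∈ s.primeFactors := Nat.mem_primeFactors.mpr ⟨hp, hps, hs.ne'⟩
          exact (le_iSup₂ (f := fun p (_ : p ∈ s.primeFactors) => P p) p hpF) hzP
        have hyo : orderOf y ∣ ordCompl[p] n := orderOf_dvd_of_pow_eq_one hyb
        have hyT : y ∈ T := by
          refine ih (orderOf y)
            (lt_of_le_of_lt (Nat.le_of_dvd (Nat.pos_of_ne_zero hb0) hyo) hblt) y rfl ?_
          intro q hq hqy
          exact hsm q hq (hqy.trans (hyo.trans ⟨p ^ n.factorization p, by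
            rw [mul_comm]; exact hab.symm⟩))
        rw [hxyz]
        exact mul_mem hyT hzT
  -- decomposition: x ^ s ∈ B → x ∈ B ⊔ T
  have decomp : ∀ n : ℕ, ∀ x : Γ, orderOf x = n → x ^ s ∈ B → x ∈ B ⊔ T := by
    intro n
    induction n using Nat.strong_induction_on with
    | _ n ih =>
      intro x hx hxB
      by_cases hsm : ∀ q : ℕ, q.Prime → q ∣ n → q ∣ s
      · exact Subgroup.mem_sup_right (smooth_mem n x hx hsm)
      · push_neg at hsm
        obtain ⟨q, hq, hqn, hqs⟩ := hsm
        have hn0 : n ≠ 0 := by rw [← hx]; exact (orderOf_pos x).ne'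
        have hab : q ^ n.factorization q * ordCompl[q] n = n :=
          Nat.ordProj_mul_ordCompl_eq_self n q
        have hcop : Nat.Coprime (q ^ n.factorization q) (ordCompl[q] n) :=
          Nat.Coprime.pow_left _ (Nat.coprime_ordCompl hq hn0)
        obtain ⟨y, z, hxyz, ⟨my, hmy⟩, ⟨mz, hmz⟩, hyb, hza⟩ :=
          split_pow x (by rw [hx]; exact hab) hcop
        have hb0 : ordCompl[q] n ≠ 0 := by
          intro h
          rw [h, mul_zero] at hab
          exact hn0 hab.symm
        have ha1 : 1 < q ^ n.factorization q :=
          Nat.one_lt_pow (hq.factorization_pos_of_dvd hn0 hqn).ne' hq.one_lt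
        have hblt : ordCompl[q] n < n := by
          calc ordCompl[q] n = 1 * ordCompl[q] n := (one_mul _).symm
            _ < q ^ n.factorization q * ordCompl[q] n :=
                (Nat.mul_lt_mul_right (Nat.pos_of_ne_zero hb0)).mpr ha1
            _ = n := hab
        have hpowB : ∀ m : ℤ, (x ^ m) ^ s ∈ B := by
          intro m
          rw [← zpow_natCast (x ^ m) s, ← zpow_mul, mul_comm, zpow_mul, zpow_natCast]
          exact Subgroup.zpow_mem B hxB m
        have hzB : z ∈ B := by
          refine mem_of_pow_mem B z ?_ (by rw [hmz]; exact hpowB mz)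
          have h1 : orderOf z ∣ q ^ n.factorization q := orderOf_dvd_of_pow_eq_one hza
          exact Nat.Coprime.coprime_dvd_right h1
            (Nat.Coprime.pow_right _ ((hq.coprime_iff_not_dvd.mpr hqs).symm))
        have hyo : orderOf y ∣ ordCompl[q] n := orderOf_dvd_of_pow_eq_one hyb
        have hyBT : y ∈ B ⊔ T :=
          ih (orderOf y)
            (lt_of_le_of_lt (Nat.le_of_dvd (Nat.pos_of_ne_zero hb0) hyo) hblt) y rfl
            (by rw [hmy]; exact hpowB my)
        rw [hxyz]
        exact mul_mem hyBT (Subgroup.mem_sup_left hzB)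
  refine ⟨B ⊔ T, le_sup_left, ?_, ?_⟩
  · intro x hx
    exact decomp (orderOf x) x rfl hx
  · exact ⟨∑ p ∈ s.primeFactors, e p,
      (relindex_sup_dvd_card hTnormal).trans (hTcard.trans hprod)⟩

end AuxLemmas

theorem stmt_12 {G : Type*} [Group G] [Group.IsNilpotent G] [Group.FG G]
    (H : Subgroup G) [H.FiniteIndex] (s : ℕ) (hs : 0 < s) :
    ∃ k : ℕ,
      H.relIndex (Subgroup.closure {g : G | sInf {n : ℕ | 0 < n ∧ g ^ n ∈ H} ∣ s}) ∣ s ^ k := by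
  classical
  set S : Set G := {g : G | sInf {n : ℕ | 0 < n ∧ g ^ n ∈ H} ∣ s} with hS
  have hSsub : S ⊆ {g : G | g ^ s ∈ H} := by
    intro g hg
    simp only [hS, Set.mem_setOf_eq] at hg
    have hd0 : sInf {n : ℕ | 0 < n ∧ g ^ n ∈ H} ≠ 0 := by
      intro h
      rw [h] at hg
      exact hs.ne' (Nat.eq_zero_of_zero_dvd hg)
    have hne : {n : ℕ | 0 < n ∧ g ^ n ∈ H}.Nonempty := by
      by_contra h
      rw [Set.not_nonempty_iff_eq_empty] at h
      rw [h, Nat.sInf_empty] at hd0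
      exact hd0 rfl
    obtain ⟨hdpos, hdmem⟩ := Nat.sInf_mem hne
    obtain ⟨c, hc⟩ := hg
    show g ^ s ∈ H
    rw [hc, pow_mul]
    exact pow_mem hdmem c
  have hHle : H ≤ Subgroup.closure S := by
    intro h hh
    apply Subgroup.subset_closure
    show sInf {n : ℕ | 0 < n ∧ h ^ n ∈ H} ∣ s
    have hmem : (1 : ℕ) ∈ {n : ℕ | 0 < n ∧ h ^ n ∈ H} := ⟨one_pos, by simpa using hh⟩
    have hle := Nat.sInf_le hmem
    have hpos := (Nat.sInf_mem (⟨1, hmem⟩ : {n : ℕ | 0 < n ∧ h ^ n ∈ H}.Nonempty)).1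
    have h1 : sInf {n : ℕ | 0 < n ∧ h ^ n ∈ H} = 1 := by omega
    rw [h1]
    exact one_dvd s
  set N := H.normalCore with hN
  let π := QuotientGroup.mk' N
  have hπ : Function.Surjective π := QuotientGroup.mk'_surjective N
  obtain ⟨Mbar, hBM, hsubM, k, hdvd⟩ := aux_finite (H.map π) s hs
  set M := Mbar.comap π with hM
  have hHM : H ≤ M := fun g hg => hBM (Subgroup.mem_map_of_mem π hg)
  have hclM : Subgroup.closure S ≤ M := by
    rw [Subgroup.closure_le]
    intro g hg
    have hmem : (π g) ^ s ∈ H.map π := by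
      rw [← map_pow]
      exact Subgroup.mem_map_of_mem π (hSsub hg)
    exact hsubM hmem
  have hrel : H.relIndex M = (H.map π).relIndex Mbar := by
    have hH : (H.map π).comap π = H := by
      rw [Subgroup.comap_map_eq, QuotientGroup.ker_mk', sup_eq_left.mpr H.normalCore_le]
    calc H.relIndex M = ((H.map π).comap π).relIndex (Mbar.comap π) := by rw [hH]
      _ = (H.map π).relIndex ((Mbar.comap π).map π) := Subgroup.relIndex_comap (H.map π) π (Mbar.comap π)
      _ = (H.map π).relIndex Mbar := by
          rw [Subgroup.map_comap_eq_self_of_surjective hπ]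
  refine ⟨k, ?_⟩
  have hdvd2 : H.relIndex (Subgroup.closure S) ∣ H.relIndex M :=
    ⟨(Subgroup.closure S).relIndex M,
      (Subgroup.relIndex_mul_relIndex H (Subgroup.closure S) M hHle hclM).symm⟩
  exact hdvd2.trans (hrel ▸ hdvd)
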